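/- If G is a finite group, then Pr(G) ≥ (1/|G'|)(1 + (|G'| - 1)/|G : Z(G)|). In particular, Pr(G) > 1/|G'| if G is non-abelian. -/

import Mathlib

open scoped Classical
open scoped commutatorElement

/-- The commutativity degree of a finite group `G`. -/
noncomputable def commDeg (G : Type*) [Group G] : ℚ :=
  (Nat.card {p : G × G // p.1 * p.2 = p.2 * p.1} : ℚ) / (Nat.card G) ^ 2


lemma card_conjClass_le {G : Type*} [Group G] [Finite G] (c : ConjClasses G) :
    Nat.card c.carrier ≤ Nat.card (commutator G) := by
  obtain ⟨x, rfl⟩ := c.exists_rep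
  refine Nat.card_le_card_of_injective
    (fun y => ⟨x⁻¹ * (y : G), ?_⟩) (fun a b h => ?_)
  · obtain ⟨y, hy⟩ := y
    rw [ConjClasses.mem_carrier_iff_mk_eq, eq_comm, ConjClasses.mk_eq_mk_iff_isConj,
      isConj_iff] at hy
    obtain ⟨g, rfl⟩ := hy
    have : x⁻¹ * (g * x * g⁻¹) = ⁅x⁻¹, g⁆ := by group
    rw [this, commutator_def]
    exact Subgroup.commutator_mem_commutator (Subgroup.mem_top _) (Subgroup.mem_top _)
  · simpa [Subtype.ext_iff, mul_right_inj] using h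

lemma card_noncenter_classes {G : Type*} [Group G] [Fintype G] :
    (ConjClasses.noncenter G).toFinset.card =
      Nat.card (ConjClasses G) - Nat.card (Subgroup.center G) := by
  have h1 : ((ConjClasses.noncenter G)ᶜ).toFinset.card = Nat.card (Subgroup.center G) := by
    rw [Set.toFinset_card, ← Nat.card_eq_fintype_card]
    exact (Nat.card_congr ((ConjClasses.mk_bijOn G).equiv _)).symm
  have h2 := Finset.card_add_card_compl (ConjClasses.noncenter G).toFinset
  rw [← Set.toFinset_compl] at h2
  rw [Nat.card_eq_fintype_card (α := ConjClasses G)]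
  omega

lemma key_nat {G : Type*} [Group G] [Fintype G] :
    Nat.card G + Nat.card (Subgroup.center G) * Nat.card (commutator G) ≤
      Nat.card (Subgroup.center G) +
        Nat.card (ConjClasses G) * Nat.card (commutator G) := by
  classical
  set z := Nat.card (Subgroup.center G)
  set k := Nat.card (ConjClasses G)
  set m := Nat.card (commutator G)
  have hce := Group.card_center_add_sum_card_noncenter_eq_card G
  have hsum : ∑ x ∈ (ConjClasses.noncenter G).toFinset, x.carrier.toFinset.card
      ≤ (k - z) * m := by
    rw [← card_noncenter_classes]
    calc _ ≤ ∑ _x ∈ (ConjClasses.noncenter G).toFinset, m :=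
          Finset.sum_le_sum (fun x _ => by
            rw [Set.toFinset_card, ← Nat.card_eq_fintype_card]; exact card_conjClass_le x)
      _ = _ := by rw [Finset.sum_const, smul_eq_mul]
  have hzk : z ≤ k := by
    have := card_noncenter_classes (G := G)
    have h1 : ((ConjClasses.noncenter G)ᶜ).toFinset.card = z := by
      rw [Set.toFinset_card, ← Nat.card_eq_fintype_card]
      exact (Nat.card_congr ((ConjClasses.mk_bijOn G).equiv _)).symm
    have h2 : ((ConjClasses.noncenter G)ᶜ).toFinset.card ≤ Fintype.card (ConjClasses G) :=
      Finset.card_le_univ _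
    rw [h1] at h2
    simpa [k, Nat.card_eq_fintype_card] using h2
  have hn : Nat.card G = Fintype.card G := Nat.card_eq_fintype_card
  have hz : z = Fintype.card (Subgroup.center G) := Nat.card_eq_fintype_card
  have h3 : (k - z) * m = k * m - z * m := Nat.sub_mul k z m
  have h4 : z * m ≤ k * m := Nat.mul_le_mul_right m hzk
  omega

theorem commDeg_lower_bound (G : Type*) [Group G] [Fintype G] :
    commDeg G ≥ (1 / (Nat.card (commutator G) : ℚ)) *
        (1 + ((Nat.card (commutator G) : ℚ) - 1) / ((Subgroup.center G).index : ℚ)) ∧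
      (¬ (∀ a b : G, a * b = b * a) → commDeg G > 1 / (Nat.card (commutator G) : ℚ)) := by
  have hD : commDeg G = (Nat.card (ConjClasses G) : ℚ) / Nat.card G := by
    rw [show commDeg G = commProb G from rfl]; exact commProb_def' G
  set n : ℚ := (Nat.card G : ℚ) with hn'
  set k : ℚ := (Nat.card (ConjClasses G) : ℚ) with hk'
  set z : ℚ := (Nat.card (Subgroup.center G) : ℚ) with hz'
  set m : ℚ := (Nat.card (commutator G) : ℚ) with hm'
  set i : ℚ := ((Subgroup.center G).index : ℚ) with hi'
  have hn : 0 < n := by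
    rw [hn']; exact_mod_cast Nat.card_pos
  have hm : 0 < m := by
    rw [hm']; exact_mod_cast Nat.card_pos
  have hi : 0 < i := by
    rw [hi']
    exact_mod_cast Nat.pos_of_ne_zero ((Subgroup.center G).index_ne_zero_of_finite)
  have hzi : z * i = n := by
    rw [hz', hi', hn', ← Nat.cast_mul, Nat.cast_inj]
    exact (Subgroup.center G).card_mul_index
  have key : n + z * m ≤ z + k * m := by
    rw [hn', hz', hk', hm']
    exact_mod_cast key_nat (G := G)
  have h1 : commDeg G ≥ 1 / m * (1 + (m - 1) / i) := by
    rw [ge_iff_le, hD, show (1:ℚ) / m * (1 + (m - 1) / i) = (i + (m - 1)) / (m * i) by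
      field_simp, div_le_div_iff₀ (by positivity) hn]
    nlinarith [mul_le_mul_of_nonneg_right key hi.le]
  refine ⟨h1, fun h => ?_⟩
  have hm2 : 2 ≤ m := by
    rw [hm']
    have : commutator G ≠ ⊥ := by
      intro hbot
      apply h
      intro a b
      have := Subgroup.commutator_eq_bot_iff_le_centralizer.mp hbot (Subgroup.mem_top a)
      rw [Subgroup.mem_centralizer_iff] at this
      exact (this b (Subgroup.mem_top b)).symm
    exact_mod_cast (Subgroup.one_lt_card_iff_ne_bot (commutator G)).mpr this
  refine lt_of_lt_of_le ?_ h1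
  have hd : 0 < (m - 1) / i := div_pos (by linarith) hi
  have hpos := mul_pos (one_div_pos.mpr hm) hd
  nlinarith [hpos]
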